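/- Let N = 1. For every n ∈ ℕ, the function i h_n belongs to 𝓗_n; consequently, for every m ∈ ℕ, span_ℝ{i h₀, i h₁, …, i h_m} ⊆ 𝓗_m. -/

import Mathlib

open MeasureTheory Filter Set
open scoped ENNReal Topology BigOperators

noncomputable section

/-- The Fourier integral with normalization `(2π)^{-N/2} ∫ e^{-i⟨x,ξ⟩} f(x) dx`,
meaningful for integrable `f`. -/
def fourierIntegralC (N : ℕ) (f : EuclideanSpace ℝ (Fin N) → ℂ)
    (ξ : EuclideanSpace ℝ (Fin N)) : ℂ :=
  ((2 * Real.pi : ℝ) ^ (-(N : ℝ) / 2) : ℝ) •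
    ∫ x : EuclideanSpace ℝ (Fin N), Complex.exp (-Complex.I * ((inner ℝ x ξ : ℝ) : ℂ)) * f x

/-- The inverse Fourier integral `(2π)^{-N/2} ∫ e^{i⟨x,ξ⟩} f(ξ) dξ`. -/
def fourierIntegralInvC (N : ℕ) (f : EuclideanSpace ℝ (Fin N) → ℂ)
    (x : EuclideanSpace ℝ (Fin N)) : ℂ :=
  ((2 * Real.pi : ℝ) ^ (-(N : ℝ) / 2) : ℝ) •
    ∫ ξ : EuclideanSpace ℝ (Fin N), Complex.exp (Complex.I * ((inner ℝ x ξ : ℝ) : ℂ)) * f ξ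

/-- `g` is the image of `f ∈ L²` under the continuous (Plancherel) extension of the
integral transform `K` defined on `L¹ ∩ L²`. -/
def IsPlancherelExtensionOf (N : ℕ)
    (K : (EuclideanSpace ℝ (Fin N) → ℂ) → EuclideanSpace ℝ (Fin N) → ℂ)
    (f g : EuclideanSpace ℝ (Fin N) → ℂ) : Prop :=
  MemLp f 2 (volume : Measure (EuclideanSpace ℝ (Fin N))) ∧ MemLp g 2 volume ∧
  ∃ φ : ℕ → EuclideanSpace ℝ (Fin N) → ℂ,
    (∀ n, Integrable (φ n) volume ∧ MemLp (φ n) 2 volume) ∧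
    Tendsto (fun n => eLpNorm (fun x => f x - φ n x) 2 volume) atTop (𝓝 0) ∧
    Tendsto (fun n => eLpNorm (fun ξ => g ξ - K (φ n) ξ) 2 volume) atTop (𝓝 0)

open Classical in
/-- The unitary Fourier–Plancherel transform `𝓕` on `L²(ℝᴺ,ℂ)` (an arbitrary
representative; it is well defined up to a.e. equality, and junk if `f ∉ L²`). -/
def fourierL2 (N : ℕ) (f : EuclideanSpace ℝ (Fin N) → ℂ) :
    EuclideanSpace ℝ (Fin N) → ℂ :=
  if h : ∃ g, IsPlancherelExtensionOf N (fourierIntegralC N) f g then h.choose else 0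

open Classical in
/-- The inverse Fourier–Plancherel transform `𝓕⁻¹` on `L²(ℝᴺ,ℂ)`. -/
def fourierL2Inv (N : ℕ) (f : EuclideanSpace ℝ (Fin N) → ℂ) :
    EuclideanSpace ℝ (Fin N) → ℂ :=
  if h : ∃ g, IsPlancherelExtensionOf N (fourierIntegralInvC N) f g then h.choose else 0

/-- The Sobolev `Hˢ`-norm `‖ξ ↦ (1+‖ξ‖²)^{s/2} (𝓕 f)(ξ)‖_{L²}`, valued in `ℝ≥0∞`. -/
def HsNorm (N : ℕ) (s : ℝ) (f : EuclideanSpace ℝ (Fin N) → ℂ) : ℝ≥0∞ :=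
  eLpNorm (fun ξ : EuclideanSpace ℝ (Fin N) =>
    (((1 + ‖ξ‖ ^ 2) ^ (s / 2) : ℝ) : ℂ) * fourierL2 N f ξ) 2 volume

/-- Membership in the Sobolev space `Hˢ(ℝᴺ,ℂ)`. -/
def MemHs (N : ℕ) (s : ℝ) (f : EuclideanSpace ℝ (Fin N) → ℂ) : Prop :=
  MemLp f 2 (volume : Measure (EuclideanSpace ℝ (Fin N))) ∧ HsNorm N s f < ⊤

/-- The unitary propagator `U(t,a) = e^{itΔ - i⟨a,P⟩}`, defined on the Fourier side by
multiplication by `e^{-it‖ξ‖² + i⟨a,ξ⟩}`. -/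
def schroU (N : ℕ) (t : ℝ) (a : EuclideanSpace ℝ (Fin N))
    (f : EuclideanSpace ℝ (Fin N) → ℂ) : EuclideanSpace ℝ (Fin N) → ℂ :=
  fourierL2Inv N (fun ξ =>
    Complex.exp (Complex.I * ((-(t * ‖ξ‖ ^ 2) + (inner ℝ a ξ : ℝ) : ℝ) : ℂ)) * fourierL2 N f ξ)

/-- The zeroth Hermite function `h₀(x) = π^{-N/4} e^{-‖x‖²/2}` in dimension `N`. -/
def hZero (N : ℕ) (x : EuclideanSpace ℝ (Fin N)) : ℝ :=
  Real.pi ^ (-(N : ℝ) / 4) * Real.exp (-‖x‖ ^ 2 / 2)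

/-- Continuity of a curve of states with respect to the `Hˢ`-distance, on a time set `I`. -/
def ContinuousInHs (N : ℕ) (s : ℝ) (I : Set ℝ)
    (ψ : ℝ → EuclideanSpace ℝ (Fin N) → ℂ) : Prop :=
  ∀ t ∈ I, ∀ ε : ℝ, 0 < ε → ∃ δ > (0:ℝ), ∀ t' ∈ I, |t' - t| < δ →
    HsNorm N s (fun x => ψ t' x - ψ t x) < ENNReal.ofReal ε

/-- Mild solution of (NLS)
`i∂ₜψ = (-Δ + u₀(t) h₀ + ⟨u(t),P⟩ + κ|ψ|^{2p})ψ` with initial state `ψ₀` on the time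
set `I`: a curve, continuous in `Hˢ`, with `ψ(0)=ψ₀`, satisfying the Duhamel formula
`ψ(t) = U(t,∫₀ᵗu)ψ₀ - i∫₀ᵗ U(t-τ,∫_τᵗu)[(u₀(τ)h₀ + κ|ψ(τ)|^{2p})ψ(τ)] dτ`. -/
def IsMildSolution (N : ℕ) (s : ℝ) (p : ℕ) (κ : ℝ)
    (u₀ : ℝ → ℝ) (u : ℝ → EuclideanSpace ℝ (Fin N)) (I : Set ℝ)
    (ψ₀ : EuclideanSpace ℝ (Fin N) → ℂ)
    (ψ : ℝ → EuclideanSpace ℝ (Fin N) → ℂ) : Prop :=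
  ψ 0 = ψ₀ ∧ (∀ t ∈ I, MemHs N s (ψ t)) ∧ ContinuousInHs N s I ψ ∧
  ∀ t ∈ I, ψ t =ᵐ[(volume : Measure (EuclideanSpace ℝ (Fin N)))] fun x =>
    schroU N t (∫ r in (0:ℝ)..t, u r) ψ₀ x -
      Complex.I * ∫ τ in (0:ℝ)..t,
        schroU N (t - τ) (∫ r in τ..t, u r)
          (fun y => (((u₀ τ * hZero N y : ℝ) : ℂ) +
            (κ : ℂ) * ((‖ψ τ y‖ ^ (2 * p) : ℝ) : ℂ)) * ψ τ y) x

/-- `f` is piecewise constant on `[a,b]`. -/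
def PiecewiseConstOn {E : Type*} (f : ℝ → E) (a b : ℝ) : Prop :=
  ∃ n : ℕ, ∃ t : Fin (n + 1) → ℝ, t 0 = a ∧ t (Fin.last n) = b ∧ Monotone t ∧
    ∀ i : Fin n, ∀ x ∈ Set.Ico (t i.castSucc) (t i.succ), f x = f (t i.castSucc)

/-- The `n`-th Hermite function
`hₙ(x) = (−1)ⁿ (2ⁿ n! √π)^{−1/2} e^{x²/2} (dⁿ/dxⁿ) e^{−x²}`. -/
def hermiteFn (n : ℕ) (x : ℝ) : ℝ :=
  (-1 : ℝ) ^ n * ((2 ^ n * n.factorial * Real.sqrt Real.pi : ℝ) ^ (-(1 : ℝ) / 2)) *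
    Real.exp (x ^ 2 / 2) * (deriv^[n] fun y : ℝ => Real.exp (-y ^ 2)) x

/-- The tensor product of one-dimensional Hermite functions. -/
def hermiteTensor (N : ℕ) (m : Fin N → ℕ) (x : EuclideanSpace ℝ (Fin N)) : ℝ :=
  ∏ j, hermiteFn (m j) (x j)

/-- The momentum operator `P_k = i ∂/∂x_k`. -/
def Pop (N : ℕ) (k : Fin N) (f : EuclideanSpace ℝ (Fin N) → ℂ) :
    EuclideanSpace ℝ (Fin N) → ℂ :=
  fun x => Complex.I * fderiv ℝ f x (EuclideanSpace.single k 1)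

/-- The saturation spaces: `𝓗₀ = span_ℝ {i h_{0,…,0}}` and
`𝓗_{j+1} = {φ₀ + i ∑ₖ P_k φ_k : φ₀, φ₁, …, φ_N ∈ 𝓗_j}`. -/
def Hspace (N : ℕ) : ℕ → Set (EuclideanSpace ℝ (Fin N) → ℂ)
  | 0 => {f | ∃ c : ℝ, f = fun x => (c : ℂ) * Complex.I * (hermiteTensor N (fun _ => 0) x : ℂ)}
  | j + 1 => {f | ∃ φ₀ ∈ Hspace N j, ∃ φ : Fin N → EuclideanSpace ℝ (Fin N) → ℂ,
      (∀ k, φ k ∈ Hspace N j) ∧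
      f = fun x => φ₀ x + Complex.I * ∑ k : Fin N, Pop N k (φ k) x}

/-- `D^α f = 𝓕⁻¹[ξ ↦ (iξ)^α (𝓕 f)(ξ)]` for a multi-index `α`. -/
def Dop (N : ℕ) (α : Fin N → ℕ) (f : EuclideanSpace ℝ (Fin N) → ℂ) :
    EuclideanSpace ℝ (Fin N) → ℂ :=
  fourierL2Inv N fun ξ => (∏ k, (Complex.I * ((ξ k : ℝ) : ℂ)) ^ α k) * fourierL2 N f ξ

open Classical in
/-- The localized Sobolev norm `‖f‖_{Hˢ(S)} = (Σ_{|α|≤s} ‖1_S · D^α f‖²_{L²})^{1/2}`. -/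
def HsNormOn (N s : ℕ) (S : Set (EuclideanSpace ℝ (Fin N)))
    (f : EuclideanSpace ℝ (Fin N) → ℂ) : ℝ≥0∞ :=
  (∑ α ∈ (Fintype.piFinset fun _ : Fin N => Finset.range (s + 1)).filter
      (fun α => ∑ k, α k ≤ s),
    eLpNorm (S.indicator (Dop N α f)) 2 volume ^ 2) ^ (1 / 2 : ℝ)

/-- The state `φ_{ζ,S}(x) = (ρ_S(x)/|S|) e^{i⟨ζ,x⟩}`. -/
def phiS (N : ℕ) (S : Set (EuclideanSpace ℝ (Fin N)))
    (ρ : EuclideanSpace ℝ (Fin N) → ℝ) (ζ x : EuclideanSpace ℝ (Fin N)) : ℂ :=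
  ((ρ x / (volume S).toReal : ℝ) : ℂ) * Complex.exp (Complex.I * ((inner ℝ ζ x : ℝ) : ℂ))

section AuxHermite
open Polynomial

def Pp : ℕ → Polynomial ℝ
  | 0 => 1
  | n+1 => Polynomial.C 2 * Polynomial.X * Pp n - Polynomial.derivative (Pp n)

lemma Pp_succ (n : ℕ) :
    Pp (n+1) = Polynomial.C 2 * Polynomial.X * Pp n - Polynomial.derivative (Pp n) := rfl

lemma Pp_deriv (n : ℕ) :
    Polynomial.derivative (Pp (n+1)) = Polynomial.C (2*(n+1) : ℝ) * Pp n := by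
  induction n with
  | zero => simp [Pp]
  | succ k ih =>
    rw [Pp_succ (k+1), derivative_sub, derivative_mul, derivative_mul, ih,
      derivative_C, derivative_X, derivative_C_mul, Pp_succ k]
    push_cast
    simp only [Polynomial.C_add, Polynomial.C_mul, Polynomial.C_1]
    ring

lemma gauss_hasDerivAt (x : ℝ) :
    HasDerivAt (fun y : ℝ => Real.exp (-y ^ 2)) (-(2*x) * Real.exp (-x ^ 2)) x := by
  have h1 : HasDerivAt (fun y : ℝ => -y ^ 2) (-(2*x)) x := by
    simpa using (hasDerivAt_pow 2 x).fun_neg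
  simpa [mul_comm, Function.comp_def] using (Real.hasDerivAt_exp (-x ^ 2)).comp x h1

lemma gauss_iter (n : ℕ) (x : ℝ) :
    (deriv^[n] fun y : ℝ => Real.exp (-y ^ 2)) x
      = (-1)^n * (Pp n).eval x * Real.exp (-x ^ 2) := by
  induction n generalizing x with
  | zero => simp [Pp]
  | succ k ih =>
    rw [Function.iterate_succ_apply']
    have hfun : (deriv^[k] fun y : ℝ => Real.exp (-y ^ 2))
        = fun x => (-1)^k * (Pp k).eval x * Real.exp (-x ^ 2) := funext ih
    rw [hfun]
    have hd : HasDerivAt (fun x : ℝ => (-1:ℝ)^k * (Pp k).eval x * Real.exp (-x ^ 2))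
        ((-1)^k * ((Pp k).derivative.eval x * Real.exp (-x ^ 2)
          + (Pp k).eval x * (-(2*x) * Real.exp (-x ^ 2)))) x := by
      have := ((Pp k).hasDerivAt x).mul (gauss_hasDerivAt x)
      simpa [mul_assoc, mul_comm, mul_left_comm] using this.const_mul ((-1:ℝ)^k)
    rw [hd.deriv, Pp_succ, Polynomial.eval_sub, Polynomial.eval_mul, Polynomial.eval_mul,
      Polynomial.eval_C, Polynomial.eval_X]
    ring

def Cn (n : ℕ) : ℝ := ((2 ^ n * n.factorial * Real.sqrt Real.pi : ℝ) ^ (-(1 : ℝ) / 2))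

lemma hermite_eq (n : ℕ) (x : ℝ) :
    hermiteFn n x = Cn n * (Pp n).eval x * Real.exp (-(x ^ 2) / 2) := by
  have hE : Real.exp (x ^ 2 / 2) * Real.exp (-x ^ 2) = Real.exp (-(x ^ 2) / 2) := by
    rw [← Real.exp_add]; ring_nf
  have hs : ((-1:ℝ)) ^ n * (-1) ^ n = 1 := by
    rw [← mul_pow]; norm_num
  rw [hermiteFn, gauss_iter]
  calc (-1:ℝ) ^ n * ((2 ^ n * n.factorial * Real.sqrt Real.pi : ℝ) ^ (-(1 : ℝ) / 2)) *
        Real.exp (x ^ 2 / 2) * ((-1) ^ n * (Pp n).eval x * Real.exp (-x ^ 2))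
      = ((-1:ℝ) ^ n * (-1) ^ n) * (Cn n * (Pp n).eval x *
          (Real.exp (x ^ 2 / 2) * Real.exp (-x ^ 2))) := by rw [Cn]; ring
    _ = Cn n * (Pp n).eval x * Real.exp (-(x ^ 2) / 2) := by rw [hs, hE]; ring

lemma base_pos (n : ℕ) : (0:ℝ) < 2 ^ n * n.factorial * Real.sqrt Real.pi := by
  positivity

lemma Cn_pos (n : ℕ) : 0 < Cn n := Real.rpow_pos_of_pos (base_pos n) _

lemma Cn_succ (n : ℕ) : Cn n = Real.sqrt (2*(n+1)) * Cn (n+1) := by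
  have h1 : (0:ℝ) < 2 * (n+1) := by positivity
  have hbase : (2 ^ (n+1) * (n+1).factorial * Real.sqrt Real.pi : ℝ)
      = (2 * (n+1)) * (2 ^ n * n.factorial * Real.sqrt Real.pi) := by
    rw [Nat.factorial_succ]
    push_cast
    ring
  have h2 : Real.sqrt (2*(n+1)) * ((2 * (n+1) : ℝ)) ^ (-(1:ℝ) / 2) = 1 := by
    rw [Real.sqrt_eq_rpow _, ← Real.rpow_add h1]
    norm_num
  rw [Cn, Cn, hbase, Real.mul_rpow h1.le (base_pos n).le, ← mul_assoc, h2, one_mul]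

lemma gaussHalf_hasDerivAt (x : ℝ) :
    HasDerivAt (fun y : ℝ => Real.exp (-(y ^ 2) / 2)) (-x * Real.exp (-(x ^ 2) / 2)) x := by
  have h1 : HasDerivAt (fun y : ℝ => -(y ^ 2) / 2) (-x) x := by
    have h := (hasDerivAt_pow 2 x).fun_neg.div_const 2
    exact h.congr_deriv (by ring)
  simpa [mul_comm, Function.comp_def] using (Real.hasDerivAt_exp (-(x ^ 2) / 2)).comp x h1

lemma hermite_hasDerivAt_raw (n : ℕ) (x : ℝ) :
    HasDerivAt (hermiteFn n)
      (Cn n * ((Pp n).derivative.eval x - x * (Pp n).eval x) * Real.exp (-(x ^ 2) / 2)) x := by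
  have hfun : hermiteFn n = fun x => Cn n * ((Pp n).eval x * Real.exp (-(x ^ 2) / 2)) := by
    funext x; rw [hermite_eq]; ring
  rw [hfun]
  have := (((Pp n).hasDerivAt x).fun_mul (gaussHalf_hasDerivAt x)).const_mul (Cn n)
  exact this.congr_deriv (by ring)

lemma fact1 (a : ℝ) (ha : 0 ≤ a) :
    Real.sqrt ((a+1)/2) * Real.sqrt (2*(a+1)) = a+1 := by
  rw [← Real.sqrt_mul (by positivity)]
  rw [show (a+1)/2 * (2*(a+1)) = (a+1)^2 by ring, Real.sqrt_sq (by positivity)]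

lemma fact2 (a : ℝ) (ha : 0 ≤ a) :
    2 * Real.sqrt ((a+2)/2) = Real.sqrt (2*(a+2)) := by
  rw [show 2*(a+2) = 4 * ((a+2)/2) by ring, Real.sqrt_mul (by norm_num : (0:ℝ) ≤ 4),
    show Real.sqrt 4 = 2 by rw [show (4:ℝ) = 2^2 by norm_num, Real.sqrt_sq (by norm_num)]]

lemma hermite_hasDerivAt (n : ℕ) (x : ℝ) :
    HasDerivAt (hermiteFn n)
      (Real.sqrt (n/2) * hermiteFn (n-1) x - Real.sqrt ((n+1)/2) * hermiteFn (n+1) x) x := by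
  have raw := hermite_hasDerivAt_raw n x
  convert raw using 1
  cases n with
  | zero =>
    have h1 : hermiteFn 1 x = Cn 1 * (2*x) * Real.exp (-(x^2)/2) := by
      rw [hermite_eq]
      simp [Pp, Pp_succ]
    have hC : Cn 0 = Real.sqrt 2 * Cn 1 := by
      simpa using Cn_succ 0
    have h2 : Real.sqrt (((0:ℝ)+1)/2) * 2 = Real.sqrt 2 := by
      rw [show ((0:ℝ)+1)/2 = (2:ℝ)⁻¹ by norm_num, Real.sqrt_inv]
      rw [inv_mul_eq_iff_eq_mul₀ (by positivity), Real.mul_self_sqrt (by norm_num)]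
    simp only [Nat.cast_zero, h1, hC]
    rw [show (Pp 0) = 1 from rfl]
    simp only [Polynomial.derivative_one, Polynomial.eval_zero, Polynomial.eval_one]
    rw [show ((0:ℝ))/2 = 0 by norm_num, Real.sqrt_zero]
    push_cast
    linear_combination (-(Cn 1 * x * Real.exp (-(x^2)/2))) * h2
  | succ k =>
    have hk0 : hermiteFn k x = Real.sqrt (2*(k+1)) * Cn (k+1) * (Pp k).eval x
        * Real.exp (-(x^2)/2) := by rw [hermite_eq, ← Cn_succ]
    have hk2 : hermiteFn (k+2) x = Cn (k+2) * (2*x*(Pp (k+1)).eval x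
        - (2*(k+1)) * (Pp k).eval x) * Real.exp (-(x^2)/2) := by
      rw [hermite_eq, Pp_succ (k+1), Polynomial.eval_sub, Polynomial.eval_mul,
        Polynomial.eval_mul, Polynomial.eval_C, Polynomial.eval_X, Pp_deriv k,
        Polynomial.eval_mul, Polynomial.eval_C]
    have hd : (Pp (k+1)).derivative.eval x = (2*(k+1)) * (Pp k).eval x := by
      rw [Pp_deriv k, Polynomial.eval_mul, Polynomial.eval_C]
    have r3 : Cn (k+1) = Real.sqrt (2*((k:ℝ)+2)) * Cn (k+2) := by
      have := Cn_succ (k+1)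
      push_cast at this ⊢
      convert this using 4 <;> ring
    have r1 := fact1 (k:ℝ) (Nat.cast_nonneg k)
    have r2 := fact2 (k:ℝ) (Nat.cast_nonneg k)
    simp only [Nat.add_sub_cancel]
    rw [hk0, hk2, hd, r3]
    push_cast
    rw [show ((k:ℝ)+1+1) = ((k:ℝ)+2) by ring]
    linear_combination (Real.sqrt (2*((k:ℝ)+2)) * Cn (k+2) * (Pp k).eval x
        * Real.exp (-(x^2)/2)) * r1 +
      (Cn (k+2) * (((k:ℝ)+1) * (Pp k).eval x - x * (Pp (k+1)).eval x)
        * Real.exp (-(x^2)/2)) * r2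

lemma hFormula (n : ℕ) (x : ℝ) :
    hermiteFn (n+1) x = Real.sqrt (n/(n+1)) * hermiteFn (n-1) x
      - Real.sqrt (2/(n+1)) * deriv (hermiteFn n) x := by
  rw [(hermite_hasDerivAt n x).deriv]
  have h1 : Real.sqrt (2/((n:ℝ)+1)) * Real.sqrt ((n:ℝ)/2) = Real.sqrt ((n:ℝ)/((n:ℝ)+1)) := by
    rw [← Real.sqrt_mul (by positivity)]
    congr 1
    field_simp
  have h2 : Real.sqrt (2/((n:ℝ)+1)) * Real.sqrt (((n:ℝ)+1)/2) = 1 := by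
    rw [← Real.sqrt_mul (by positivity)]
    rw [show 2/((n:ℝ)+1) * (((n:ℝ)+1)/2) = 1 by field_simp, Real.sqrt_one]
  linear_combination (hermiteFn (n-1) x) * h1 - (hermiteFn (n+1) x) * h2

abbrev Es := EuclideanSpace ℝ (Fin 1)

def Sf (m : ℕ) (c : ℕ → ℝ) : Es → ℂ :=
  fun x => ∑ k ∈ Finset.range (m+1), (c k : ℂ) * (Complex.I * ((hermiteFn k (x 0) : ℝ) : ℂ))

lemma hasFDerivAt_term (k : ℕ) (a : ℂ) (x : Es) :
    HasFDerivAt (fun x : Es => a * ((hermiteFn k (x 0) : ℝ) : ℂ))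
      (a • (Complex.ofRealCLM.comp
        ((deriv (hermiteFn k) (x 0)) • (EuclideanSpace.proj (0 : Fin 1) : Es →L[ℝ] ℝ)))) x := by
  have hx : HasFDerivAt (fun x : Es => x 0)
      (EuclideanSpace.proj (0 : Fin 1) : Es →L[ℝ] ℝ) x :=
    (EuclideanSpace.proj (0 : Fin 1) : Es →L[ℝ] ℝ).hasFDerivAt
  have hh : HasDerivAt (hermiteFn k) (deriv (hermiteFn k) (x 0)) (x 0) :=
    (hermite_hasDerivAt k (x 0)).deriv ▸ hermite_hasDerivAt k (x 0)
  have h2 := hh.comp_hasFDerivAt x hx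
  have h3 := Complex.ofRealCLM.hasFDerivAt.comp x h2
  exact h3.const_mul a

lemma Pop_Sf (m : ℕ) (c : ℕ → ℝ) (x : Es) :
    Pop 1 0 (Sf m c) x = Complex.I * ∑ k ∈ Finset.range (m+1),
      (c k : ℂ) * Complex.I * ((deriv (hermiteFn k) (x 0) : ℝ) : ℂ) := by
  have hF : HasFDerivAt (Sf m c)
      (∑ k ∈ Finset.range (m+1), ((c k : ℂ) * Complex.I) • (Complex.ofRealCLM.comp
        ((deriv (hermiteFn k) (x 0)) • (EuclideanSpace.proj (0 : Fin 1) : Es →L[ℝ] ℝ)))) x := by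
    apply HasFDerivAt.fun_sum
    intro k _
    simpa [mul_assoc] using hasFDerivAt_term k ((c k : ℂ) * Complex.I) x
  rw [Pop, hF.fderiv]
  have heval : (∑ k ∈ Finset.range (m+1), ((c k : ℂ) * Complex.I) • (Complex.ofRealCLM.comp
        ((deriv (hermiteFn k) (x 0)) • (EuclideanSpace.proj (0 : Fin 1) : Es →L[ℝ] ℝ))))
        (EuclideanSpace.single (0 : Fin 1) (1:ℝ))
      = ∑ k ∈ Finset.range (m+1),
        (c k : ℂ) * Complex.I * ((deriv (hermiteFn k) (x 0) : ℝ) : ℂ) := by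
    rw [ContinuousLinearMap.sum_apply]
    refine Finset.sum_congr rfl fun k _ => ?_
    simp [EuclideanSpace.single_apply, mul_assoc]
  rw [heval]

lemma Sf_mem (m : ℕ) : ∀ c : ℕ → ℝ, Sf m c ∈ Hspace 1 m := by
  induction m with
  | zero =>
    intro c
    refine ⟨c 0, ?_⟩
    funext x
    simp only [Sf, hermiteTensor, Fin.prod_univ_one]
    rw [Finset.sum_range_one]
    push_cast
    ring
  | succ m ih =>
    intro c
    set a := c (m+1) * Real.sqrt (m/(m+1)) with ha
    set b := c (m+1) * Real.sqrt (2/(m+1)) with hb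
    refine ⟨Sf m (fun k => c k + (if k = m-1 then a else 0)), ih _,
      fun _ => Sf m (fun k => if k = m then b else 0), fun _ => ih _, ?_⟩
    funext x
    rw [Fin.sum_univ_one, Pop_Sf]
    have hsum2 : (∑ k ∈ Finset.range (m+1),
        (((if k = m then b else 0 : ℝ)) : ℂ) * Complex.I
          * ((deriv (hermiteFn k) (x 0) : ℝ) : ℂ))
        = (b : ℂ) * Complex.I * ((deriv (hermiteFn m) (x 0) : ℝ) : ℂ) := by
      rw [Finset.sum_eq_single_of_mem m (Finset.self_mem_range_succ m)
        (fun k _ hk => by simp [if_neg hk])]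
      simp
    rw [hsum2]
    have hsplit : Sf m (fun k => c k + (if k = m-1 then a else 0)) x
        = Sf m c x + (a : ℂ) * (Complex.I * ((hermiteFn (m-1) (x 0) : ℝ) : ℂ)) := by
      simp only [Sf, Complex.ofReal_add, add_mul]
      rw [Finset.sum_add_distrib]
      congr 1
      rw [Finset.sum_eq_single_of_mem (m-1) (Finset.mem_range.mpr (by omega))
        (fun k _ hk => by simp [if_neg hk])]
      simp
    rw [hsplit]
    have hS1 : Sf (m+1) c x = Sf m c x
        + (c (m+1) : ℂ) * (Complex.I * ((hermiteFn (m+1) (x 0) : ℝ) : ℂ)) := by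
      simp only [Sf]
      rw [Finset.sum_range_succ]
    rw [hS1]
    have hr : c (m+1) * hermiteFn (m+1) (x 0)
        = a * hermiteFn (m-1) (x 0) - b * deriv (hermiteFn m) (x 0) := by
      rw [hFormula m (x 0), ha, hb]
      ring
    have hrC := congrArg (fun t : ℝ => (t : ℂ)) hr
    push_cast at hrC
    linear_combination Complex.I * hrC - (Complex.I * (b:ℂ) * ((deriv (hermiteFn m) (x 0) : ℝ):ℂ)) * Complex.I_sq

lemma Sf_single (m n : ℕ) (hn : n ≤ m) :
    Sf m (fun k => if k = n then 1 else 0)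
      = fun x => Complex.I * ((hermiteFn n (x 0) : ℝ) : ℂ) := by
  funext x
  simp only [Sf]
  rw [Finset.sum_eq_single_of_mem n (Finset.mem_range.mpr (by omega))
    (fun k _ hk => by simp [if_neg hk])]
  simp

def Lmap (m : ℕ) : (ℕ → ℝ) →ₗ[ℝ] (Es → ℂ) where
  toFun := Sf m
  map_add' c d := by
    funext x
    simp only [Sf, Pi.add_apply]
    rw [← Finset.sum_add_distrib]
    refine Finset.sum_congr rfl fun k _ => ?_
    push_cast
    ring
  map_smul' r c := by
    funext x
    simp only [Sf, Pi.smul_apply, RingHom.id_apply, smul_eq_mul]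
    rw [Finset.smul_sum]
    refine Finset.sum_congr rfl fun k _ => ?_
    simp only [Complex.real_smul]
    push_cast
    ring

end AuxHermite

theorem statement12 :
    (∀ n : ℕ,
      (fun x : EuclideanSpace ℝ (Fin 1) => Complex.I * ((hermiteFn n (x 0) : ℝ) : ℂ)) ∈
        Hspace 1 n) ∧
    ∀ m : ℕ, ∀ g ∈ Submodule.span ℝ
        {f : EuclideanSpace ℝ (Fin 1) → ℂ |
          ∃ n ≤ m, f = fun x => Complex.I * ((hermiteFn n (x 0) : ℝ) : ℂ)},
      g ∈ Hspace 1 m := by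
  constructor
  · intro n
    rw [← Sf_single n n le_rfl]
    exact Sf_mem n _
  · intro m g hg
    have hsub : {f : EuclideanSpace ℝ (Fin 1) → ℂ |
        ∃ n ≤ m, f = fun x => Complex.I * ((hermiteFn n (x 0) : ℝ) : ℂ)}
        ⊆ (LinearMap.range (Lmap m) : Submodule ℝ (Es → ℂ)) := by
      rintro f ⟨n, hn, rfl⟩
      exact ⟨fun k => if k = n then 1 else 0, Sf_single m n hn⟩
    have hle := Submodule.span_le.mpr hsub
    obtain ⟨c, hc⟩ := hle hg
    rw [← hc]
    exact Sf_mem m c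

end
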